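/- Let p be a prime, q a power of p, and K a finite field with q^2 elements. Let m be a positive divisor of q+1. Then the number of pairs (x,y) ∈ K × K with y^q + y = x^m equals m·q·(q-1) + q. (Equivalently, the curve y^q + y = x^m, which has exactly one point at infinity, has q^2 + 1 + (m-1)(q-1)q rational points over K, attaining the Hasse–Weil upper bound for its genus g = (m-1)(q-1)/2.) -/

import Mathlib

open Finset Polynomial

/-- In a finite field, for every positive divisor `n` of `card K - 1` there exists a
primitive `n`-th root of unity. -/
lemma exists_primitiveRoot_of_dvd_card_sub_one (K : Type*) [Field K] [Fintype K] {n : ℕ}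
    (hn : 0 < n) (h : n ∣ Fintype.card K - 1) : ∃ ζ : K, IsPrimitiveRoot ζ n := by
  classical
  obtain ⟨g, hg⟩ := IsCyclic.exists_generator (α := Kˣ)
  have hog : orderOf g = Fintype.card K - 1 := by
    rw [orderOf_eq_card_of_forall_mem_zpowers hg, Nat.card_eq_fintype_card, Fintype.card_units]
  set N := Fintype.card K - 1 with hN
  have hN0 : 0 < N := by
    have := Fintype.one_lt_card (α := K)
    omega
  have hdvd : N / n ∣ N := Nat.div_dvd_of_dvd h
  have hord : orderOf (g ^ (N / n)) = n := by
    rw [orderOf_pow, hog, Nat.gcd_eq_right hdvd, Nat.div_div_self h hN0.ne']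
  refine ⟨((g ^ (N / n) : Kˣ) : K), IsPrimitiveRoot.coe_units_iff.mpr ?_⟩
  have h2 := IsPrimitiveRoot.orderOf (g ^ (N / n))
  rwa [hord] at h2

/-- In a finite field, the number of `n`-th roots of unity is `n` when `n` divides
`card K - 1`. -/
lemma card_pow_eq_one_of_dvd_card_sub_one (K : Type*) [Field K] [Fintype K] [DecidableEq K]
    {n : ℕ} (hn : 0 < n) (h : n ∣ Fintype.card K - 1) :
    #(Finset.univ.filter fun x : K => x ^ n = 1) = n := by
  obtain ⟨ζ, hζ⟩ := exists_primitiveRoot_of_dvd_card_sub_one K hn h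
  have hset : (Finset.univ.filter fun x : K => x ^ n = 1) = nthRootsFinset n (1 : K) := by
    ext x
    simp [Polynomial.mem_nthRootsFinset hn]
  rw [hset, hζ.card_nthRootsFinset]

/-- Let `p` be a prime, `q` a power of `p`, and `K` a finite field with `q^2` elements.
Let `m` be a positive divisor of `q+1`. Then the number of pairs `(x, y) ∈ K × K` with
`y^q + y = x^m` equals `m·q·(q-1) + q`; i.e. the maximal curve `y^q + y = x^m` has
`q^2 + 1 + (m-1)(q-1)q` rational points over `K` (one of which is at infinity). -/
theorem affine_point_count_of_hermitian_quotient
    (p q m : ℕ) (hp : p.Prime) (hq : ∃ e : ℕ, 0 < e ∧ q = p ^ e)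
    (hm : 0 < m) (hdvd : m ∣ q + 1)
    (K : Type*) [Field K] [Fintype K] (hK : Fintype.card K = q ^ 2) :
    Nat.card {xy : K × K // xy.2 ^ q + xy.2 = xy.1 ^ m} = m * q * (q - 1) + q := by
  classical
  obtain ⟨e, he0, hqe⟩ := hq
  haveI : Fact p.Prime := ⟨hp⟩
  have hq2 : 2 ≤ q := by
    have h1 : p ≤ p ^ e := Nat.le_self_pow he0.ne' p
    have := hp.two_le
    omega
  -- the characteristic of `K` is `p`
  haveI hcharK : CharP K p := by
    haveI := ringChar.charP K
    obtain ⟨n, hprime, hcard⟩ := FiniteField.card K (ringChar K)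
    have hdvd' : ringChar K ∣ p ^ (2 * e) := by
      have : (ringChar K) ^ (n : ℕ) = p ^ (2 * e) := by
        rw [← hcard, hK, hqe, ← pow_mul, mul_comm e 2]
      rw [← this]
      exact dvd_pow_self _ (by positivity)
    have hrc : ringChar K = p :=
      (Nat.prime_dvd_prime_iff_eq hprime hp).mp (hprime.dvd_of_dvd_pow hdvd')
    exact hrc ▸ ringChar.charP K
  -- Frobenius-type identities
  have hfrob : ∀ a b : K, (a + b) ^ q = a ^ q + b ^ q := by
    intro a b
    rw [hqe]
    exact add_pow_char_pow a b p e
  have hfrobsub : ∀ a b : K, (a - b) ^ q = a ^ q - b ^ q := by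
    intro a b
    rw [hqe]
    exact sub_pow_char_pow a b e
  have hqpos : 0 < q := by omega
  have hpowcard : ∀ a : K, a ^ q ^ 2 = a := by
    intro a
    rw [← hK]
    exact FiniteField.pow_card a
  have hfix : ∀ y : K, (y ^ q + y) ^ q = y ^ q + y := by
    intro y
    rw [hfrob, ← pow_mul, ← sq, hpowcard, add_comm]
  -- kernel of the trace-type map
  set S0 : Finset K := Finset.univ.filter (fun y : K => y ^ q + y = 0) with hS0
  have hS0_le : #S0 ≤ q := by
    have hsub : S0 ⊆ insert (0 : K) ((nthRoots (q - 1) (-1 : K)).toFinset) := by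
      intro y hy
      rw [hS0, mem_filter] at hy
      rcases eq_or_ne y 0 with h0 | h0
      · simp [h0]
      · refine Finset.mem_insert_of_mem ?_
        rw [Multiset.mem_toFinset, mem_nthRoots (by omega : 0 < q - 1)]
        have hyq : y ^ (q - 1) * y = y ^ q := by
          rw [← pow_succ]
          congr 1
          omega
        have : y ^ (q - 1) * y = (-1) * y := by
          rw [hyq]
          have := hy.2
          linear_combination this
        exact mul_right_cancel₀ h0 this
    calc #S0 ≤ #(insert (0 : K) ((nthRoots (q - 1) (-1 : K)).toFinset)) :=
          Finset.card_le_card hsub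
      _ ≤ #((nthRoots (q - 1) (-1 : K)).toFinset) + 1 := Finset.card_insert_le _ _
      _ ≤ (q - 1) + 1 := by
          gcongr
          exact (Multiset.toFinset_card_le _).trans (Polynomial.card_nthRoots _ _)
      _ = q := by omega
  -- the set of elements fixed by the q-Frobenius has exactly q elements
  set F : Finset K := Finset.univ.filter (fun c : K => c ^ q = c) with hF
  have hq1dvd : (q - 1) ∣ Fintype.card K - 1 := by
    refine ⟨q + 1, ?_⟩
    rw [hK]
    zify [show (1:ℕ) ≤ q by omega, (by nlinarith : (1:ℕ) ≤ q ^ 2)]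
    ring
  have hFcard : #F = q := by
    have hFeq : F = insert (0 : K) (Finset.univ.filter fun c : K => c ^ (q - 1) = 1) := by
      ext c
      rw [hF, mem_filter, Finset.mem_insert, mem_filter]
      constructor
      · rintro ⟨-, hc⟩
        rcases eq_or_ne c 0 with h0 | h0
        · exact Or.inl h0
        · refine Or.inr ⟨Finset.mem_univ _, ?_⟩
          have hcq : c ^ (q - 1) * c = c ^ q := by
            rw [← pow_succ]; congr 1; omega
          have : c ^ (q - 1) * c = 1 * c := by rw [hcq, hc, one_mul]
          exact mul_right_cancel₀ h0 this
      · rintro (h0 | ⟨-, hc⟩)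
        · subst h0
          exact ⟨Finset.mem_univ _, by rw [zero_pow hqpos.ne']⟩
        · refine ⟨Finset.mem_univ _, ?_⟩
          have hcq : c ^ (q - 1) * c = c ^ q := by
            rw [← pow_succ]; congr 1; omega
          rw [← hcq, hc, one_mul]
    rw [hFeq, Finset.card_insert_of_notMem, card_pow_eq_one_of_dvd_card_sub_one K
      (by omega) hq1dvd]
    · omega
    · intro h
      rw [mem_filter] at h
      have := h.2
      rw [zero_pow (by omega : q - 1 ≠ 0)] at this
      exact one_ne_zero this.symm
  -- fibers over attained values all have cardinality #S0
  have hfiber : ∀ c : K, (∃ y₀ : K, y₀ ^ q + y₀ = c) →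
      #(Finset.univ.filter fun y : K => y ^ q + y = c) = #S0 := by
    rintro c ⟨y₀, hy₀⟩
    refine Finset.card_bij' (fun y _ => y - y₀) (fun y _ => y + y₀) ?_ ?_ ?_ ?_
    · intro y hy
      rw [mem_filter] at hy
      rw [hS0, mem_filter]
      refine ⟨Finset.mem_univ _, ?_⟩
      rw [hfrobsub]
      linear_combination hy.2 - hy₀
    · intro y hy
      rw [hS0, mem_filter] at hy
      rw [mem_filter]
      refine ⟨Finset.mem_univ _, ?_⟩
      rw [hfrob]
      linear_combination hy.2 + hy₀
    · intro y _; ring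
    · intro y _; ring
  -- the image of the trace map is exactly F
  set T : Finset K := Finset.univ.image (fun y : K => y ^ q + y) with hT
  have hTF : T ⊆ F := by
    intro c hc
    rw [hT, Finset.mem_image] at hc
    obtain ⟨y, -, rfl⟩ := hc
    rw [hF, mem_filter]
    exact ⟨Finset.mem_univ _, hfix y⟩
  have hcardK : (Fintype.card K) = #T * #S0 := by
    rw [← Finset.card_univ,
      Finset.card_eq_sum_card_fiberwise (f := fun y : K => y ^ q + y) (t := T)
        (fun y _ => by rw [hT]; exact Finset.mem_image_of_mem _ (Finset.mem_univ y))]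
    have hcongr : ∀ c ∈ T, #(Finset.univ.filter fun y : K => y ^ q + y = c) = #S0 := by
      intro c hc
      rw [hT, Finset.mem_image] at hc
      obtain ⟨y, -, rfl⟩ := hc
      exact hfiber _ ⟨y, rfl⟩
    rw [Finset.sum_congr rfl hcongr, Finset.sum_const, smul_eq_mul]
  have hTcard : #T = q ∧ #S0 = q := by
    have h1 : #T ≤ q := hFcard ▸ Finset.card_le_card hTF
    have h2 : #T * #S0 = q * q := by rw [← hcardK, hK, sq]
    have hS0q : #S0 = q := by
      have h3 : q * q ≤ q * #S0 := by
        calc q * q = #T * #S0 := h2.symm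
          _ ≤ q * #S0 := Nat.mul_le_mul_right _ h1
      exact le_antisymm hS0_le (Nat.le_of_mul_le_mul_left h3 hqpos)
    rw [hS0q] at h2
    exact ⟨Nat.eq_of_mul_eq_mul_right hqpos h2, hS0q⟩
  have hTeqF : T = F := Finset.eq_of_subset_of_card_le hTF (by rw [hFcard, hTcard.1])
  -- now count solutions
  have hcount : Nat.card {xy : K × K // xy.2 ^ q + xy.2 = xy.1 ^ m}
      = ∑ x : K, #(Finset.univ.filter fun y : K => y ^ q + y = x ^ m) := by
    rw [Nat.card_eq_fintype_card,
      Fintype.card_congr (Equiv.subtypeProdEquivSigmaSubtype fun (x y : K) => y ^ q + y = x ^ m),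
      Fintype.card_sigma]
    exact Finset.sum_congr rfl fun x _ => Fintype.card_subtype _
  have hfibval : ∀ x : K, #(Finset.univ.filter fun y : K => y ^ q + y = x ^ m)
      = if (x ^ m) ^ q = x ^ m then q else 0 := by
    intro x
    split_ifs with hx
    · have hmem : x ^ m ∈ F := by rw [hF, mem_filter]; exact ⟨Finset.mem_univ _, hx⟩
      rw [← hTeqF, hT, Finset.mem_image] at hmem
      obtain ⟨y₀, -, hy₀⟩ := hmem
      rw [hfiber _ ⟨y₀, hy₀⟩, hTcard.2]
    · rw [Finset.card_eq_zero, Finset.filter_eq_empty_iff]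
      intro y _ hy
      exact hx (hy ▸ hfix y)
  rw [hcount, Finset.sum_congr rfl (fun x _ => hfibval x), Finset.sum_ite, Finset.sum_const,
    Finset.sum_const_zero, add_zero, smul_eq_mul]
  -- count the x's
  have hAcard : #(Finset.univ.filter fun x : K => (x ^ m) ^ q = x ^ m) = 1 + m * (q - 1) := by
    have hmq : m * (q - 1) ∣ Fintype.card K - 1 := by
      obtain ⟨t, ht⟩ := hdvd
      refine ⟨t, ?_⟩
      rw [hK]
      zify [show (1:ℕ) ≤ q by omega, (by nlinarith : (1:ℕ) ≤ q ^ 2)]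
      have : (q : ℤ) + 1 = m * t := by exact_mod_cast ht
      linear_combination (q - 1 : ℤ) * this
    have hmqpos : 0 < m * (q - 1) := Nat.mul_pos hm (by omega)
    have hAeq : (Finset.univ.filter fun x : K => (x ^ m) ^ q = x ^ m)
        = insert (0 : K) (Finset.univ.filter fun x : K => x ^ (m * (q - 1)) = 1) := by
      ext x
      rw [mem_filter, Finset.mem_insert, mem_filter]
      constructor
      · rintro ⟨-, hx⟩
        rcases eq_or_ne x 0 with h0 | h0
        · exact Or.inl h0
        · refine Or.inr ⟨Finset.mem_univ _, ?_⟩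
          have h1 : x ^ (m * (q - 1)) * x ^ m = (x ^ m) ^ q := by
            rw [← pow_mul, ← pow_add]
            congr 1
            zify [show (1:ℕ) ≤ q by omega]
            ring
          have h2 : x ^ (m * (q - 1)) * x ^ m = 1 * x ^ m := by
            rw [h1, hx, one_mul]
          exact mul_right_cancel₀ (pow_ne_zero _ h0) h2
      · rintro (h0 | ⟨-, hx⟩)
        · subst h0
          refine ⟨Finset.mem_univ _, ?_⟩
          rw [zero_pow hm.ne', zero_pow hqpos.ne']
        · refine ⟨Finset.mem_univ _, ?_⟩
          have h1 : x ^ (m * (q - 1)) * x ^ m = (x ^ m) ^ q := by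
            rw [← pow_mul, ← pow_add]
            congr 1
            zify [show (1:ℕ) ≤ q by omega]
            ring
          rw [← h1, hx, one_mul]
    rw [hAeq, Finset.card_insert_of_notMem, card_pow_eq_one_of_dvd_card_sub_one K hmqpos hmq]
    · omega
    · intro h
      rw [mem_filter] at h
      have := h.2
      rw [zero_pow hmqpos.ne'] at this
      exact one_ne_zero this.symm
  rw [hAcard]
  have hq1 : 1 ≤ q := by omega
  zify [hq1]
  ring
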